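/- Let Φ be a P×N real matrix with N < P such that ΦᵀΦ is invertible, let V be a P×(P−N) real matrix with ΦᵀV = 0 and VᵀV = I, let D_V be a (P−N)×(P−N) diagonal matrix, and let Ω and Z be N×N diagonal matrices. Define C = Φ·(ΦᵀΦ)⁻²·Φᵀ + V·D_V·Vᵀ, G = Φ·(ΦᵀΦ)⁻¹·2·Z·Ω·(ΦᵀΦ)⁻¹·Φᵀ, and B = Φ·(ΦᵀΦ)⁻¹·Ω²·(ΦᵀΦ)⁻¹·Φᵀ. Then Φᵀ·C·Φ = I, Φᵀ·G·Φ = 2·Z·Ω, and Φᵀ·B·Φ = Ω². -/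
import Mathlib


open Matrix

/-- Network synthesis in the case `P > N_s`: with `Φ` of full column rank,
`V` an orthonormal basis of the kernel of `Φᵀ`, and
`C = Φ(ΦᵀΦ)⁻²Φᵀ + V·D_V·Vᵀ`, `G = Φ(ΦᵀΦ)⁻¹·2ZΩ·(ΦᵀΦ)⁻¹Φᵀ`, `B = Φ(ΦᵀΦ)⁻¹Ω²(ΦᵀΦ)⁻¹Φᵀ`,
the modal relations `ΦᵀCΦ = I`, `ΦᵀGΦ = 2ZΩ` and `ΦᵀBΦ = Ω²` hold. -/
theorem network_synthesis_more_transducers {P N : ℕ} (hNP : N < P)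
    (Φ : Matrix (Fin P) (Fin N) ℝ) (hΦ : IsUnit (Φᵀ * Φ))
    (V : Matrix (Fin P) (Fin (P - N)) ℝ)
    (hV1 : Φᵀ * V = 0) (hV2 : Vᵀ * V = 1)
    (dV : Fin (P - N) → ℝ) (DV : Matrix (Fin (P - N)) (Fin (P - N)) ℝ)
    (hDV : DV = Matrix.diagonal dV)
    (ω ζ : Fin N → ℝ) (Ω Z : Matrix (Fin N) (Fin N) ℝ)
    (hΩ : Ω = Matrix.diagonal ω) (hZ : Z = Matrix.diagonal ζ)
    (C G B : Matrix (Fin P) (Fin P) ℝ)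
    (hC : C = Φ * ((Φᵀ * Φ)⁻¹ * (Φᵀ * Φ)⁻¹) * Φᵀ + V * DV * Vᵀ)
    (hG : G = Φ * (Φᵀ * Φ)⁻¹ * ((2 : ℝ) • (Z * Ω)) * (Φᵀ * Φ)⁻¹ * Φᵀ)
    (hB : B = Φ * (Φᵀ * Φ)⁻¹ * Ω ^ 2 * (Φᵀ * Φ)⁻¹ * Φᵀ) :
    Φᵀ * C * Φ = 1 ∧
    Φᵀ * G * Φ = (2 : ℝ) • (Z * Ω) ∧
    Φᵀ * B * Φ = Ω ^ 2 := by
  have h1 : Φᵀ * Φ * (Φᵀ * Φ)⁻¹ = 1 := Matrix.mul_nonsing_inv _ ((Matrix.isUnit_iff_isUnit_det _).mp hΦ)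
  have h2 : (Φᵀ * Φ)⁻¹ * (Φᵀ * Φ) = 1 := Matrix.nonsing_inv_mul _ ((Matrix.isUnit_iff_isUnit_det _).mp hΦ)
  have hVT : Vᵀ * Φ = 0 := by
    have := congrArg Matrix.transpose hV1
    simpa using this
  refine ⟨?_, ?_, ?_⟩
  · rw [hC]
    rw [Matrix.mul_add, Matrix.add_mul]
    have : Φᵀ * (V * DV * Vᵀ) * Φ = 0 := by
      simp [← Matrix.mul_assoc, hV1]
    rw [this, add_zero]
    calc Φᵀ * (Φ * ((Φᵀ * Φ)⁻¹ * (Φᵀ * Φ)⁻¹) * Φᵀ) * Φ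
        = (Φᵀ * Φ * (Φᵀ * Φ)⁻¹) * ((Φᵀ * Φ)⁻¹ * (Φᵀ * Φ)) := by
          simp only [Matrix.mul_assoc]
      _ = 1 := by rw [h1, h2, Matrix.one_mul]
  · rw [hG]
    calc Φᵀ * (Φ * (Φᵀ * Φ)⁻¹ * ((2 : ℝ) • (Z * Ω)) * (Φᵀ * Φ)⁻¹ * Φᵀ) * Φ
        = (Φᵀ * Φ * (Φᵀ * Φ)⁻¹) * ((2 : ℝ) • (Z * Ω)) * ((Φᵀ * Φ)⁻¹ * (Φᵀ * Φ)) := by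
          simp only [Matrix.mul_assoc]
      _ = (2 : ℝ) • (Z * Ω) := by rw [h1, h2, Matrix.one_mul, Matrix.mul_one]
  · rw [hB]
    calc Φᵀ * (Φ * (Φᵀ * Φ)⁻¹ * Ω ^ 2 * (Φᵀ * Φ)⁻¹ * Φᵀ) * Φ
        = (Φᵀ * Φ * (Φᵀ * Φ)⁻¹) * Ω ^ 2 * ((Φᵀ * Φ)⁻¹ * (Φᵀ * Φ)) := by
          simp only [Matrix.mul_assoc]
      _ = Ω ^ 2 := by rw [h1, h2, Matrix.one_mul, Matrix.mul_one]
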